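/- Let d ≥ 3 be odd and let ℰ ⊂ ℝ² be the closed triangle with vertices (0,1), (−1/2, 0) and (−1/3, 0). For (x,y) ∈ ℰ define G(x,y) = 2y − 6x + 2·(x−y)^{1/d}, where t^{1/d} denotes the unique real d-th root of t. Then G(x,y) ≥ 0 for all (x,y) ∈ ℰ, with equality if and only if (x,y) = (0,1). Equivalently, writing T_d⁻²(x,y) = (f(x,y), g(x,y)) with g(x,y) = 3y − 6x + 2(x−y)^{1/d}, one has g(x,y) ≥ y on ℰ with equality only at (0,1). -/
import Mathlib


/-- The unique real d-th root of `t` (for odd `d`). -/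
noncomputable def oddRoot (d : ℕ) (t : ℝ) : ℝ :=
  if 0 ≤ t then t ^ ((1 : ℝ) / d) else -((-t) ^ ((1 : ℝ) / d))

/-- The closed triangle `ℰ` with vertices `(0,1)`, `(−1/2,0)` and `(−1/3,0)`. -/
noncomputable def triE : Set (ℝ × ℝ) :=
  convexHull ℝ {((0 : ℝ), (1 : ℝ)), ((-1 / 2 : ℝ), (0 : ℝ)), ((-1 / 3 : ℝ), (0 : ℝ))}

/-- `G(x,y) = 2y − 6x + 2(x−y)^{1/d}`. -/
noncomputable def Gfun (d : ℕ) (p : ℝ × ℝ) : ℝ :=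
  2 * p.2 - 6 * p.1 + 2 * oddRoot d (p.1 - p.2)

/-- Second component of `T_d⁻²`: `g(x,y) = 3y − 6x + 2(x−y)^{1/d}`. -/
noncomputable def gfun (d : ℕ) (p : ℝ × ℝ) : ℝ :=
  3 * p.2 - 6 * p.1 + 2 * oddRoot d (p.1 - p.2)

lemma triE_subset :
    triE ⊆ {p : ℝ × ℝ | 1/3 ≤ p.2 - p.1 ∧ p.2 - p.1 ≤ 1 ∧ 1 ≤ p.2 - 3 * p.1} := by
  apply convexHull_min
  · rintro p (rfl | rfl | rfl) <;> norm_num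
  · rintro p ⟨h1, h2, h3⟩ q ⟨g1, g2, g3⟩ a b ha hb hab
    simp only [Set.mem_setOf_eq, Prod.fst_add, Prod.snd_add, Prod.smul_fst, Prod.smul_snd,
      smul_eq_mul]
    refine ⟨?_, ?_, ?_⟩ <;>
      nlinarith [mul_le_mul_of_nonneg_left h1 ha, mul_le_mul_of_nonneg_left g1 hb,
        mul_le_mul_of_nonneg_left h2 ha, mul_le_mul_of_nonneg_left g2 hb,
        mul_le_mul_of_nonneg_left h3 ha, mul_le_mul_of_nonneg_left g3 hb]

lemma key (d : ℕ) (hd : 3 ≤ d) (p : ℝ × ℝ) (hp : p ∈ triE) :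
    0 ≤ Gfun d p ∧ (Gfun d p = 0 ↔ p = (0, 1)) := by
  obtain ⟨h1, h2, h3⟩ := triE_subset hp
  obtain ⟨x, y⟩ := p
  simp only [Set.mem_setOf_eq] at h1 h2 h3 ⊢
  have hdpos : (0 : ℝ) < (1 : ℝ) / d := by
    have : (0 : ℝ) < d := by exact_mod_cast Nat.lt_of_lt_of_le (by norm_num) hd
    positivity
  have ht : (0 : ℝ) < y - x := by linarith
  have hxy : ¬ (0 ≤ x - y) := by linarith
  have hroot : oddRoot d (x - y) = -((y - x) ^ ((1 : ℝ) / d)) := by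
    rw [oddRoot, if_neg hxy]
    norm_num
  have hle1 : (y - x) ^ ((1 : ℝ) / d) ≤ 1 := Real.rpow_le_one ht.le h2 hdpos.le
  have hG : Gfun d (x, y) = 2 * (y - 3 * x) - 2 * ((y - x) ^ ((1 : ℝ) / d)) := by
    simp only [Gfun, hroot]; ring
  constructor
  · rw [hG]; nlinarith
  constructor
  · intro h0
    rw [hG] at h0
    have heq : (y - x) ^ ((1 : ℝ) / d) = y - 3 * x := by linarith
    have h4 : (1 : ℝ) ≤ (y - x) ^ ((1 : ℝ) / d) := by rw [heq]; linarith
    have h5 : y - x = 1 := by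
      by_contra h
      have hlt : y - x < 1 := lt_of_le_of_ne h2 h
      have := Real.rpow_lt_one ht.le hlt hdpos
      linarith
    have h6 : (y - x) ^ ((1 : ℝ) / d) = 1 := by rw [h5, Real.one_rpow]
    have : y - 3 * x = 1 := by rw [← heq, h6]
    have hx : x = 0 := by linarith
    have hy : y = 1 := by linarith
    simp [hx, hy]
  · intro h
    have hx : x = 0 := (Prod.mk.injEq _ _ _ _ ▸ h).1
    have hy : y = 1 := congrArg Prod.snd h
    rw [hG, hx, hy]
    norm_num

/-- `G ≥ 0` on `ℰ`, vanishing only at `(0,1)`; equivalently the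
second component of `T_d⁻²` satisfies `g(x,y) ≥ y` on `ℰ` with equality only at
`(0,1)`. -/
theorem stmt14 (d : ℕ) (hd : 3 ≤ d) (hodd : Odd d) :
    (∀ p ∈ triE, 0 ≤ Gfun d p ∧ (Gfun d p = 0 ↔ p = (0, 1))) ∧
    (∀ p ∈ triE, p.2 ≤ gfun d p ∧ (gfun d p = p.2 ↔ p = (0, 1))) := by
  refine ⟨fun p hp => key d hd p hp, fun p hp => ?_⟩
  obtain ⟨hge, hiff⟩ := key d hd p hp
  have hGg : gfun d p = Gfun d p + p.2 := by simp [gfun, Gfun]; ring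
  constructor
  · rw [hGg]; linarith
  · rw [hGg]
    constructor
    · intro h; exact hiff.mp (by linarith)
    · intro h; rw [hiff.mpr h]; ring
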